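/- If f is an injective geometric homomorphism between geometric realizations G-bar and G-hat of the same graph G, then for every vertex v of G-bar, the number of uncrossed edges incident to v in G-bar is at least the number of uncrossed edges incident to f(v) in G-hat. -/

import Mathlib

noncomputable section

/-- A point of the plane. -/
abbrev Pt : Type := ℝ × ℝ

/-- Two straight segments cross: they meet at a point interior to both. -/
def SegCross (p q r s : Pt) : Prop :=
  (openSegment ℝ p q ∩ openSegment ℝ r s).Nonempty

/-- Points in general position: distinct, and no three collinear. -/
def GenPos {V : Type*} (pos : V → Pt) : Prop :=
  Function.Injective pos ∧
    ∀ a b c : V, a ≠ b → b ≠ c → a ≠ c →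
      ¬ Collinear ℝ ({pos a, pos b, pos c} : Set Pt)

/-- A geometric realization of an abstract graph `G`: a straight-line drawing on
points in general position. -/
structure GeomRealization {V : Type*} (G : SimpleGraph V) where
  pos : V → Pt
  genpos : GenPos pos

variable {V : Type*} {G : SimpleGraph V}

/-- Edges `e` and `f` of the realization `R` cross. -/
def GeomRealization.Crosses (R : GeomRealization G) (e f : Sym2 V) : Prop :=
  e ≠ f ∧ ∃ u v x y : V, e = s(u, v) ∧ f = s(x, y) ∧
    SegCross (R.pos u) (R.pos v) (R.pos x) (R.pos y)

/-- An injective geometric homomorphism between two geometric realizations of the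
same abstract graph `G`: an injective vertex map preserving adjacency and
crossings. -/
structure GeomHom (R S : GeomRealization G) where
  toFun : V → V
  inj : Function.Injective toFun
  adj : ∀ u v : V, G.Adj u v → G.Adj (toFun u) (toFun v)
  cross : ∀ u v x y : V, G.Adj u v → G.Adj x y →
    SegCross (R.pos u) (R.pos v) (R.pos x) (R.pos y) →
    SegCross (S.pos (toFun u)) (S.pos (toFun v)) (S.pos (toFun x)) (S.pos (toFun y))

/-- The total number of crossings of a realization: the number of unordered pairs of
edges of `G` that cross. -/
def GeomRealization.crNum (R : GeomRealization G) : ℕ :=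
  Set.ncard {q : Sym2 (Sym2 V) | ∃ e f : Sym2 V, q = s(e, f) ∧
    e ∈ G.edgeSet ∧ f ∈ G.edgeSet ∧ R.Crosses e f}

/-- `cr(e)`: the number of edges of `G` crossing the edge `e` in `R`. -/
def GeomRealization.crEdge (R : GeomRealization G) (e : Sym2 V) : ℕ :=
  Set.ncard {f : Sym2 V | f ∈ G.edgeSet ∧ R.Crosses e f}

/-- The edge `e` is uncrossed in `R`. -/
def GeomRealization.Uncrossed (R : GeomRealization G) (e : Sym2 V) : Prop :=
  ∀ f ∈ G.edgeSet, ¬ R.Crosses e f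

/-- `d₀(v)`: the number of uncrossed edges incident to the vertex `v`. -/
def GeomRealization.d0 (R : GeomRealization G) (v : V) : ℕ :=
  Set.ncard {e : Sym2 V | e ∈ G.edgeSet ∧ v ∈ e ∧ R.Uncrossed e}

/-- Under an injective geometric homomorphism `f : R → S`, each vertex `v` has at
least as many uncrossed incident edges in `R` as `f(v)` has in `S`. -/
theorem d0_ge_of_geomHom [Finite V] (R S : GeomRealization G) (f : GeomHom R S)
    (v : V) : S.d0 (f.toFun v) ≤ R.d0 v := by
  classical
  set φ : Sym2 V → Sym2 V := Sym2.map f.toFun with hφ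
  have hφinj : Function.Injective φ := Sym2.map.injective f.inj
  -- φ maps edges to edges
  have hmaps : Set.MapsTo φ G.edgeSet G.edgeSet := by
    intro e he
    induction e using Sym2.ind with
    | _ x y =>
      simp only [SimpleGraph.mem_edgeSet] at he
      simpa [hφ] using f.adj x y he
  -- φ is surjective on edges (finite)
  have hbij : Set.BijOn φ G.edgeSet G.edgeSet :=
    ((Set.toFinite G.edgeSet).injOn_iff_bijOn_of_mapsTo hmaps).mp
      (hφinj.injOn)
  set A : Set (Sym2 V) := {e | e ∈ G.edgeSet ∧ v ∈ e ∧ R.Uncrossed e} with hA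
  set B : Set (Sym2 V) := {e | e ∈ G.edgeSet ∧ f.toFun v ∈ e ∧ S.Uncrossed e} with hB
  have hsub : B ⊆ φ '' A := by
    rintro e' ⟨he', hv', hu'⟩
    obtain ⟨e, heE, heq⟩ := hbij.surjOn he'
    refine ⟨e, ⟨heE, ?_, ?_⟩, heq⟩
    · -- v ∈ e
      rw [← heq] at hv'
      obtain ⟨u, hu, hfu⟩ := Sym2.mem_map.mp hv'
      rwa [← f.inj hfu]
    · -- e is uncrossed in R
      intro g hg hcr
      obtain ⟨hne, a, b, x, y, hea, hgb, hseg⟩ := hcr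
      have hab : G.Adj a b := by rw [hea] at heE; exact heE
      have hxy : G.Adj x y := by rw [hgb] at hg; exact hg
      have hseg' := f.cross a b x y hab hxy hseg
      refine hu' (φ g) (hmaps hg) ?_
      refine ⟨?_, f.toFun a, f.toFun b, f.toFun x, f.toFun y, ?_, ?_, hseg'⟩
      · rw [← heq]; exact fun h => hne (hφinj h)
      · rw [← heq, hea]; rfl
      · rw [hgb]; rfl
  calc S.d0 (f.toFun v) = B.ncard := rfl
    _ ≤ (φ '' A).ncard := Set.ncard_le_ncard hsub (A.toFinite.image φ)
    _ = A.ncard := Set.ncard_image_of_injective A hφinj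
    _ = R.d0 v := rfl
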